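/- Let δ₁, δ₂ be nonzero real numbers. Then (1/(M·N)²) · | Σ_{m=1}^{M} Σ_{n=1}^{N} exp( −j·2π·( (m−1)·δ₁/M + (n−1)·δ₂/N ) ) |² converges, as M → ∞ and N → ∞ (jointly along the product of atTop filters on the positive integers), to Sa²(π·δ₁)·Sa²(π·δ₂), where Sa(t) = sin(t)/t. -/

import Mathlib

open Finset Filter

/-- The sampling function `Sa(t) = Real.sin t / t`. -/
noncomputable def Sa (t : ℝ) : ℝ := Real.sin t / t

lemma abs_exp_mul_I_sub_one (φ : ℝ) :
    ‖Complex.exp (φ * Complex.I) - 1‖ = 2 * |Real.sin (φ/2)| := by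
  have h : Complex.exp (φ * Complex.I) - 1 =
      Complex.exp ((φ/2 : ℝ) * Complex.I) * (2 * Complex.sin ((φ/2 : ℝ)) * Complex.I) := by
    set z : ℂ := ((φ/2 : ℝ) : ℂ) with hz
    have hef : Complex.exp (z * Complex.I) * Complex.exp (-z * Complex.I) = 1 := by
      rw [← Complex.exp_add, show z*Complex.I + -z*Complex.I = 0 by ring, Complex.exp_zero]
    rw [show ((φ:ℂ) * Complex.I) = z * Complex.I + z * Complex.I by rw [hz]; push_cast; ring,
      Complex.exp_add, Complex.sin]
    linear_combination hef + (Complex.exp (z*Complex.I)^2 -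
      Complex.exp (z*Complex.I)*Complex.exp (-z*Complex.I)) * Complex.I_sq
  rw [h, norm_mul, Complex.norm_exp_ofReal_mul_I, one_mul, norm_mul, norm_mul,
    Complex.norm_I, Complex.norm_two, mul_one, ← Complex.ofReal_sin, Complex.norm_real, Real.norm_eq_abs]

lemma sin_ne_zero_of_abs_lt_pi {x : ℝ} (hx : x ≠ 0) (hxπ : |x| < Real.pi) :
    Real.sin x ≠ 0 := by
  rcases lt_or_gt_of_ne hx with h | h
  · have h1 : 0 < Real.sin (-x) := Real.sin_pos_of_pos_of_lt_pi (by linarith)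
      (by rw [abs_of_neg h] at hxπ; linarith)
    rw [Real.sin_neg] at h1; intro h2; rw [h2] at h1; simp at h1
  · exact (Real.sin_pos_of_pos_of_lt_pi h (by rw [abs_of_pos h] at hxπ; linarith)).ne'

lemma eventual_eq_key (δ : ℝ) (hδ : δ ≠ 0) :
    ∀ᶠ M : ℕ in atTop,
      |Real.sin (Real.pi * δ)| / |(M:ℝ) * Real.sin (Real.pi * δ / M)| =
      (1/(M:ℝ)) * ‖∑ m ∈ Finset.range M,
        Complex.exp (-Complex.I * (2 * (Real.pi : ℂ)) * ((m : ℂ) * (δ : ℂ) / (M : ℂ)))‖ := by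
  have hπ := Real.pi_pos
  filter_upwards [(tendsto_natCast_atTop_atTop (R := ℝ)).eventually_gt_atTop |δ|] with M hMδ
  have hMpos : (0:ℝ) < M := lt_of_le_of_lt (abs_nonneg δ) hMδ
  have hM0 : (M:ℝ) ≠ 0 := hMpos.ne'
  set θ : ℝ := -(2*Real.pi*δ)/M with hθ
  set z : ℂ := Complex.exp ((θ:ℂ) * Complex.I) with hzdef
  have hterm : ∀ m ∈ Finset.range M,
      Complex.exp (-Complex.I * (2 * (Real.pi : ℂ)) * ((m : ℂ) * (δ : ℂ) / (M : ℂ))) = z ^ m := by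
    intro m _
    rw [hzdef, ← Complex.exp_nat_mul]
    congr 1
    rw [hθ]
    push_cast
    ring
  have hθabs : |θ| = 2*Real.pi*|δ|/M := by
    rw [hθ, abs_div, abs_neg, abs_of_pos hMpos, abs_mul, abs_of_pos (by positivity : (0:ℝ) < 2*Real.pi)]
  have hθlt : |θ| < 2*Real.pi := by
    rw [hθabs, div_lt_iff₀ hMpos]
    nlinarith [abs_nonneg δ]
  have hθne : θ ≠ 0 := by
    rw [hθ]
    exact div_ne_zero (neg_ne_zero.mpr (mul_ne_zero (by positivity) hδ)) hM0
  have hz1 : z ≠ 1 := by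
    intro h
    rw [hzdef, Complex.exp_eq_one_iff] at h
    obtain ⟨n, hn⟩ := h
    have hn' : ((θ:ℝ):ℂ) = (((n:ℝ)*(2*Real.pi):ℝ):ℂ) := by
      apply mul_right_cancel₀ Complex.I_ne_zero
      push_cast
      linear_combination hn
    have hθn : θ = (n:ℝ)*(2*Real.pi) := Complex.ofReal_inj.mp hn'
    rcases eq_or_ne n 0 with rfl | hn0
    · simp at hθn; exact hθne hθn
    · have h1 : (1:ℝ) ≤ |(n:ℝ)| := by
        rw [← Int.cast_abs]; exact_mod_cast Int.one_le_abs hn0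
      have : 2*Real.pi ≤ |θ| := by
        rw [hθn, abs_mul, abs_of_pos (by positivity : (0:ℝ) < 2*Real.pi)]
        nlinarith
      linarith
  have hzM : z ^ M = Complex.exp (((-(2*Real.pi*δ):ℝ):ℂ) * Complex.I) := by
    rw [hzdef, ← Complex.exp_nat_mul]
    congr 1
    have hMC : (M:ℂ) ≠ 0 := Nat.cast_ne_zero.mpr (by exact_mod_cast hMpos.ne')
    rw [hθ]
    push_cast
    field_simp
  have hgeom : (∑ m ∈ Finset.range M,
      Complex.exp (-Complex.I * (2 * (Real.pi : ℂ)) * ((m : ℂ) * (δ : ℂ) / (M : ℂ)))) =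
      (z ^ M - 1) / (z - 1) := by
    rw [Finset.sum_congr rfl hterm, geom_sum_eq hz1]
  have habs1 : ‖z ^ M - 1‖ = 2 * |Real.sin (Real.pi * δ)| := by
    rw [hzM, abs_exp_mul_I_sub_one]
    rw [show -(2*Real.pi*δ)/2 = -(Real.pi*δ) by ring, Real.sin_neg, abs_neg]
  have habs2 : ‖z - 1‖ = 2 * |Real.sin (Real.pi * δ / M)| := by
    rw [hzdef, abs_exp_mul_I_sub_one]
    rw [show θ/2 = -(Real.pi*δ/M) by rw [hθ]; ring, Real.sin_neg, abs_neg]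
  have hsne : Real.sin (Real.pi * δ / M) ≠ 0 := by
    apply sin_ne_zero_of_abs_lt_pi
    · exact div_ne_zero (mul_ne_zero hπ.ne' hδ) hM0
    · rw [abs_div, abs_mul, abs_of_pos hπ, abs_of_pos hMpos, div_lt_iff₀ hMpos]
      nlinarith [abs_nonneg δ]
  rw [hgeom, norm_div, habs1, habs2, abs_mul, abs_of_pos hMpos]
  have h2 : |Real.sin (Real.pi * δ / M)| ≠ 0 := abs_ne_zero.mpr hsne
  field_simp
lemma key_tendsto_aux (δ : ℝ) (hδ : δ ≠ 0) :
    Tendsto (fun M : ℕ => |Real.sin (Real.pi * δ)| / |(M:ℝ) * Real.sin (Real.pi * δ / M)|)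
      atTop (nhds |Sa (Real.pi * δ)|) := by
  have hπ := Real.pi_pos
  have hpd : Real.pi * δ ≠ 0 := mul_ne_zero hπ.ne' hδ
  have hslope : Tendsto (fun x : ℝ => Real.sin x / x) (nhdsWithin 0 {0}ᶜ) (nhds 1) := by
    have := hasDerivAt_iff_tendsto_slope.mp (Real.hasDerivAt_sin 0)
    rw [Real.cos_zero] at this
    refine this.congr fun x => ?_
    simp [slope_def_field, div_eq_div_iff]
  have harg : Tendsto (fun M : ℕ => Real.pi * δ / (M:ℝ)) atTop (nhdsWithin 0 {0}ᶜ) := by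
    rw [tendsto_nhdsWithin_iff]
    constructor
    · simpa using tendsto_const_nhds.div_atTop (tendsto_natCast_atTop_atTop (R := ℝ))
    · filter_upwards [eventually_gt_atTop 0] with M hM
      have hM0 : (M:ℝ) ≠ 0 := Nat.cast_ne_zero.mpr hM.ne'
      exact div_ne_zero hpd hM0
  have hms : Tendsto (fun M : ℕ => (M:ℝ) * Real.sin (Real.pi * δ / M)) atTop
      (nhds (Real.pi * δ)) := by
    have h2 : Tendsto (fun M : ℕ => Real.sin (Real.pi * δ / M) / (Real.pi * δ / M)) atTop
        (nhds 1) := hslope.comp harg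
    have h3 := h2.const_mul (Real.pi * δ)
    rw [mul_one] at h3
    refine h3.congr' ?_
    filter_upwards [eventually_gt_atTop 0] with M hM
    have hM0 : (M:ℝ) ≠ 0 := Nat.cast_ne_zero.mpr hM.ne'
    field_simp
  have habs := hms.abs
  have hne : |Real.pi * δ| ≠ 0 := abs_ne_zero.mpr hpd
  have hd := Tendsto.div (tendsto_const_nhds (x := |Real.sin (Real.pi * δ)|) (f := atTop (α := ℕ))) habs hne
  rw [Sa, abs_div]
  exact hd

lemma key_tendsto (δ : ℝ) (hδ : δ ≠ 0) :
    Tendsto (fun M : ℕ => (1/(M:ℝ)) * ‖∑ m ∈ Finset.range M,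
        Complex.exp (-Complex.I * (2 * (Real.pi : ℂ)) * ((m : ℂ) * (δ : ℂ) / (M : ℂ)))‖)
      atTop (nhds |Sa (Real.pi * δ)|) :=
  (key_tendsto_aux δ hδ).congr' (eventual_eq_key δ hδ)

/-- Limit of the normalized squared beamforming gain: for nonzero `δ₁, δ₂`,
`(1/(MN)²)·|∑_{m=1}^{M} ∑_{n=1}^{N} exp(-j·2π·((m-1)δ₁/M + (n-1)δ₂/N))|²` converges, as
`M, N → ∞` jointly, to `Sa²(πδ₁)·Sa²(πδ₂)`. -/
theorem normalized_gain_sq_tendsto (δ₁ δ₂ : ℝ) (h1 : δ₁ ≠ 0) (h2 : δ₂ ≠ 0) :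
    Tendsto
      (fun p : ℕ × ℕ =>
        (1 / ((p.1 : ℝ) * (p.2 : ℝ)) ^ 2) *
          (‖∑ m ∈ Finset.range p.1, ∑ n ∈ Finset.range p.2,
              Complex.exp (-Complex.I * (2 * (Real.pi : ℂ)) *
                ((m : ℂ) * (δ₁ : ℂ) / (p.1 : ℂ) + (n : ℂ) * (δ₂ : ℂ) / (p.2 : ℂ)))‖) ^ 2)
      (atTop ×ˢ atTop)
      (nhds (Sa (Real.pi * δ₁) ^ 2 * Sa (Real.pi * δ₂) ^ 2)) := by

  have hfac : ∀ p : ℕ × ℕ,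
      (1 / ((p.1 : ℝ) * (p.2 : ℝ)) ^ 2) *
          (‖∑ m ∈ Finset.range p.1, ∑ n ∈ Finset.range p.2,
              Complex.exp (-Complex.I * (2 * (Real.pi : ℂ)) *
                ((m : ℂ) * (δ₁ : ℂ) / (p.1 : ℂ) + (n : ℂ) * (δ₂ : ℂ) / (p.2 : ℂ)))‖) ^ 2
      = ((1/(p.1:ℝ)) * ‖∑ m ∈ Finset.range p.1,
            Complex.exp (-Complex.I * (2 * (Real.pi : ℂ)) * ((m : ℂ) * (δ₁ : ℂ) / (p.1 : ℂ)))‖) ^ 2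
        * ((1/(p.2:ℝ)) * ‖∑ n ∈ Finset.range p.2,
            Complex.exp (-Complex.I * (2 * (Real.pi : ℂ)) * ((n : ℂ) * (δ₂ : ℂ) / (p.2 : ℂ)))‖) ^ 2 := by
    intro p
    have hsum : (∑ m ∈ Finset.range p.1, ∑ n ∈ Finset.range p.2,
          Complex.exp (-Complex.I * (2 * (Real.pi : ℂ)) *
            ((m : ℂ) * (δ₁ : ℂ) / (p.1 : ℂ) + (n : ℂ) * (δ₂ : ℂ) / (p.2 : ℂ))))
        = (∑ m ∈ Finset.range p.1,
            Complex.exp (-Complex.I * (2 * (Real.pi : ℂ)) * ((m : ℂ) * (δ₁ : ℂ) / (p.1 : ℂ))))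
          * (∑ n ∈ Finset.range p.2,
            Complex.exp (-Complex.I * (2 * (Real.pi : ℂ)) * ((n : ℂ) * (δ₂ : ℂ) / (p.2 : ℂ)))) := by
      rw [Finset.sum_mul_sum]
      refine Finset.sum_congr rfl fun m _ => Finset.sum_congr rfl fun n _ => ?_
      rw [← Complex.exp_add]
      congr 1
      ring
    rw [hsum, norm_mul]
    push_cast
    ring
  simp only [hfac]
  have ha := (((key_tendsto δ₁ h1).comp (tendsto_fst (f := atTop (α := ℕ)) (g := atTop (α := ℕ)))).pow 2)
  have hb := (((key_tendsto δ₂ h2).comp (tendsto_snd (f := atTop (α := ℕ)) (g := atTop (α := ℕ)))).pow 2)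
  have hlim := ha.mul hb
  have heq : |Sa (Real.pi * δ₁)| ^ 2 * |Sa (Real.pi * δ₂)| ^ 2
      = Sa (Real.pi * δ₁) ^ 2 * Sa (Real.pi * δ₂) ^ 2 := by
    rw [sq_abs, sq_abs]
  rw [← heq]
  exact hlim
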